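/- arXiv:math/0112241 — 3 statements merged into one kernel-verified Lean document; each statement's English description precedes it below -/
import Mathlib

section
/- For every parameter φ ∈ ℂ^{p−1}, the Lie algebra F_φ is frobeniusian: letting ω_1 denote the coordinate functional on F_φ dual to the basis vector X_1 (so ω_1(X_1) = 1 and ω_1(X_j) = 0 for j ≥ 2), the alternating bilinear form B(x,y) = ω_1([x,y]) on F_φ is nondegenerate. -/
open scoped BigOperators

noncomputable section

/-- The underlying space ℂ^{2p} of the Lie algebra `F_φ`. -/
abbrev V (p : ℕ) : Type := Fin (2*p) → ℂ

/-- The space of bilinear maps ℂ^{2p} × ℂ^{2p} → ℂ^{2p}. -/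
abbrev Bil (p : ℕ) : Type := V p →ₗ[ℂ] V p →ₗ[ℂ] V p

/-- The basis vector `X j` (1-indexed, j = 1, …, 2p). -/
def X (p j : ℕ) : V p := fun i => if (i : ℕ) + 1 = j then 1 else 0

/-- The coordinate functional dual to `X j` (1-indexed). -/
def coordL (p j : ℕ) : V p →ₗ[ℂ] ℂ :=
  if h : j - 1 < 2*p then LinearMap.proj (⟨j - 1, h⟩ : Fin (2*p)) else 0

/-- The elementary alternating bilinear map `(x,y) ↦ (x_a y_b − x_b y_a) • v`
(indices 1-based). -/
def elem (p a b : ℕ) (v : V p) : Bil p :=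
  (coordL p a).smulRight ((coordL p b).smulRight v)
    - (coordL p b).smulRight ((coordL p a).smulRight v)

/-- The Lie bracket of the frobeniusian model algebra `F_φ`:
`[X_1,X_2] = −X_1`, `[X_{2k+1},X_{2k+2}] = −X_1`, `[X_2,X_{2k+1}] = −φ_k X_{2k+1}`,
`[X_2,X_{2k+2}] = (1+φ_k) X_{2k+2}` for `1 ≤ k ≤ p−1`. -/
def mu (p : ℕ) (φ : ℕ → ℂ) : Bil p :=
  elem p 1 2 (-(X p 1)) +
    ∑ k ∈ Finset.Icc 1 (p-1),
      (elem p (2*k+1) (2*k+2) (-(X p 1)) + elem p 2 (2*k+1) (-(φ k) • X p (2*k+1))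
        + elem p 2 (2*k+2) ((1 + φ k) • X p (2*k+2)))

/-- `φ` avoids the set `Ω₁`. -/
def AvoidsOmega1 (p : ℕ) (φ : ℕ → ℂ) : Prop :=
  ∀ i j : ℕ, 1 ≤ i → i ≤ p - 1 → 1 ≤ j → j ≤ p - 1 →
    1 + φ i + φ j ≠ 0 ∧ 2 + φ i + φ j ≠ 0 ∧ (i ≠ j → φ i ≠ φ j) ∧
      φ i ≠ 0 ∧ φ i ≠ -1 ∧ 2 * φ i + 1 ≠ 0

/-- `φ` avoids the set `Ω = Ω₁ ∪ Ω₂`. -/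
def AvoidsOmega (p : ℕ) (φ : ℕ → ℂ) : Prop :=
  AvoidsOmega1 p φ ∧
    ∀ i j : ℕ, 1 ≤ i → i ≤ p - 1 → 1 ≤ j → j ≤ p - 1 →
      (i ≠ j → 1 + φ i - φ j ≠ 0) ∧ φ i + φ j ≠ 0 ∧ 2 + φ i ≠ 0 ∧ 1 - φ i ≠ 0 ∧
        1 + 2*φ i - φ j ≠ 0 ∧ 1 + 2*φ i + φ j ≠ 0 ∧ 2*φ i - φ j ≠ 0 ∧ 2 + 2*φ i + φ j ≠ 0

/-- The space of derivations of a bilinear bracket `B` on `ℂ^{2p}`. -/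
def derSub (p : ℕ) (B : Bil p) : Submodule ℂ (V p →ₗ[ℂ] V p) where
  carrier := {D | ∀ x y, D (B x y) = B (D x) y + B x (D y)}
  add_mem' := by
    intro D E hD hE x y
    simp only [LinearMap.add_apply, hD x y, hE x y, map_add, LinearMap.add_apply]
    abel
  zero_mem' := by intro x y; simp
  smul_mem' := by
    intro c D hD x y
    simp only [LinearMap.smul_apply, hD x y, map_smul, LinearMap.map_smul₂,
      LinearMap.smul_apply, smul_add]

/-- The grading subspaces: `g_0 = ℂ X_2`, `g_1 = ⟨X_3,…,X_{2p}⟩`, `g_2 = ℂ X_1`,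
and `g_m = 0` otherwise. -/
def gr (p : ℕ) : ℤ → Submodule ℂ (V p) := fun m =>
  if m = 0 then Submodule.span ℂ {X p 2}
  else if m = 1 then Submodule.span ℂ {v | ∃ j, 3 ≤ j ∧ j ≤ 2*p ∧ v = X p j}
  else if m = 2 then Submodule.span ℂ {X p 1}
  else ⊥

/-- The space of 2-cocycles of `F_φ` with coefficients in the adjoint module
(2-cochains are alternating bilinear maps). -/
def Z2 (p : ℕ) (φ : ℕ → ℂ) : Submodule ℂ (Bil p) where
  carrier := {ψ | (∀ x, ψ x x = 0) ∧
    ∀ x y z, mu p φ x (ψ y z) - mu p φ y (ψ x z) + mu p φ z (ψ x y)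
      - ψ (mu p φ x y) z + ψ (mu p φ x z) y - ψ (mu p φ y z) x = 0}
  add_mem' := by
    rintro ψ₁ ψ₂ ⟨h₁a, h₁c⟩ ⟨h₂a, h₂c⟩
    constructor
    · intro x; simp [h₁a x, h₂a x]
    · intro x y z
      have e₁ := h₁c x y z
      have e₂ := h₂c x y z
      simp only [LinearMap.add_apply, map_add]
      rw [← sub_eq_zero] at *
      simp only [sub_zero] at *
      linear_combination (norm := module) e₁ + e₂
  zero_mem' := by
    constructor
    · intro x; simp
    · intro x y z; simp
  smul_mem' := by
    rintro c ψ ⟨ha, hc⟩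
    constructor
    · intro x; simp [ha x]
    · intro x y z
      have e := hc x y z
      simp only [LinearMap.smul_apply, map_smul]
      linear_combination (norm := module) c • e

/-- The space of 2-coboundaries of `F_φ` with coefficients in the adjoint module. -/
def B2 (p : ℕ) (φ : ℕ → ℂ) : Submodule ℂ (Bil p) where
  carrier := {ψ | ∃ f : V p →ₗ[ℂ] V p,
    ∀ x y, ψ x y = mu p φ x (f y) - mu p φ y (f x) - f (mu p φ x y)}
  add_mem' := by
    rintro ψ₁ ψ₂ ⟨f₁, h₁⟩ ⟨f₂, h₂⟩
    refine ⟨f₁ + f₂, fun x y => ?_⟩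
    simp only [LinearMap.add_apply, h₁ x y, h₂ x y, map_add]
    abel
  zero_mem' := ⟨0, by intro x y; simp⟩
  smul_mem' := by
    rintro c ψ ⟨f, h⟩
    refine ⟨c • f, fun x y => ?_⟩
    simp only [LinearMap.smul_apply, h x y, map_smul, smul_sub]

/-- The 2-cochains of degree `k` with respect to the grading `gr`. -/
def degSub (p : ℕ) (k : ℤ) : Submodule ℂ (Bil p) where
  carrier := {ψ | ∀ (a b : ℤ), ∀ x ∈ gr p a, ∀ y ∈ gr p b, ψ x y ∈ gr p (a + b + k)}
  add_mem' := by
    intro ψ₁ ψ₂ h₁ h₂ a b x hx y hy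
    simpa using Submodule.add_mem _ (h₁ a b x hx y hy) (h₂ a b x hx y hy)
  zero_mem' := by intro a b x hx y hy; simp
  smul_mem' := by
    intro c ψ h a b x hx y hy
    simpa using Submodule.smul_mem _ c (h a b x hx y hy)

attribute [local instance 100] LieRing.ofAssociativeRing

/-- The derivations of `F_φ` as a Lie subalgebra of `End(ℂ^{2p})`. -/
def derLie (p : ℕ) (φ : ℕ → ℂ) : LieSubalgebra ℂ (Module.End ℂ (V p)) :=
  { derSub p (mu p φ) with
    lie_mem' := by
      intro D E hD hE
      have hD' : ∀ x y, D (mu p φ x y) = mu p φ (D x) y + mu p φ x (D y) := hD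
      have hE' : ∀ x y, E (mu p φ x y) = mu p φ (E x) y + mu p φ x (E y) := hE
      intro x y
      simp only [Ring.lie_def, LinearMap.sub_apply, Module.End.mul_apply]
      rw [hE' x y, hD' x y, map_add, map_add, hD' (E x) y, hD' x (E y),
        hE' (D x) y, hE' x (D y)]
      simp only [map_sub, LinearMap.sub_apply]
      abel }

/-- The derivation `f_i` of `F_φ` : `f_i(X_{2i+1}) = X_{2i+1}`, `f_i(X_{2i+2}) = −X_{2i+2}`. -/
def fDer (p i : ℕ) : V p →ₗ[ℂ] V p :=
  (coordL p (2*i+1)).smulRight (X p (2*i+1)) - (coordL p (2*i+2)).smulRight (X p (2*i+2))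

/-- The 2-cocycle `ψ_k = ψ^{2k+1}_{2,2k+1}` :
`(X_2,X_{2k+1}) ↦ X_{2k+1}`, `(X_2,X_{2k+2}) ↦ −X_{2k+2}`. -/
def psiK (p k : ℕ) : Bil p :=
  elem p 2 (2*k+1) (X p (2*k+1)) - elem p 2 (2*k+2) (X p (2*k+2))

/-- The 2-cocycle `ψ^2_{12}` spanning `Z²_{−2}`. -/
def psiM2 (p : ℕ) (φ : ℕ → ℂ) : Bil p :=
  elem p 1 2 (X p 2) +
    ∑ k ∈ Finset.Icc 1 (p-1),
      (elem p (2*k+1) (2*k+2) (X p 2) + elem p 1 (2*k+1) (-(φ k) • X p (2*k+1))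
        + elem p 1 (2*k+2) ((1 + φ k) • X p (2*k+2)))

/-- The 2-cocycle `ψ^1_{2,j}` : `(X_2,X_j) ↦ X_1`. -/
def psiTop (p j : ℕ) : Bil p := elem p 2 j (X p 1)


/-! ### Plain-function versions of the relevant spaces.
We realise spaces of (multi)linear maps as submodules of plain function spaces,
the (bi)linearity being part of the defining conditions. -/

/-- `ψ : ℂ^{2p} × ℂ^{2p} → ℂ^{2p}` is bilinear. -/
def IsBil (p : ℕ) (ψ : V p → V p → V p) : Prop :=
  (∀ x x' y, ψ (x + x') y = ψ x y + ψ x' y) ∧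
  (∀ (c : ℂ) (x y), ψ (c • x) y = c • ψ x y) ∧
  (∀ x y y', ψ x (y + y') = ψ x y + ψ x y') ∧
  (∀ (c : ℂ) (x y), ψ x (c • y) = c • ψ x y)

/-- The space of derivations of a bilinear bracket `B` on `ℂ^{2p}`, realised inside
the space of all maps `ℂ^{2p} → ℂ^{2p}` (linearity is part of the conditions). -/
def derF (p : ℕ) (B : Bil p) : Submodule ℂ (V p → V p) where
  carrier := {D | (∀ x y, D (x + y) = D x + D y) ∧ (∀ (c : ℂ) (x), D (c • x) = c • D x) ∧
    ∀ x y, D (B x y) = B (D x) y + B x (D y)}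
  add_mem' := by
    rintro D E ⟨hDa, hDs, hDd⟩ ⟨hEa, hEs, hEd⟩
    refine ⟨fun x y => ?_, fun c x => ?_, fun x y => ?_⟩
    · simp only [Pi.add_apply, hDa, hEa]; abel
    · simp only [Pi.add_apply, hDs, hEs, smul_add]
    · simp only [Pi.add_apply, hDd x y, hEd x y, map_add, LinearMap.add_apply]; abel
  zero_mem' := by
    refine ⟨fun x y => ?_, fun c x => ?_, fun x y => ?_⟩ <;> simp
  smul_mem' := by
    rintro c D ⟨hDa, hDs, hDd⟩
    refine ⟨fun x y => ?_, fun c' x => ?_, fun x y => ?_⟩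
    · simp only [Pi.smul_apply, hDa, smul_add]
    · simp only [Pi.smul_apply, hDs, smul_comm c c']
    · simp only [Pi.smul_apply, hDd x y, map_smul, LinearMap.smul_apply, smul_add]

/-- The space of inner derivations `ad(v) = B(v,·)` of a bilinear bracket `B`. -/
def innerF (p : ℕ) (B : Bil p) : Submodule ℂ (V p → V p) where
  carrier := {D | ∃ v, D = fun y => B v y}
  add_mem' := by
    rintro D E ⟨v, rfl⟩ ⟨w, rfl⟩
    exact ⟨v + w, by funext y; simp [map_add]⟩
  zero_mem' := ⟨0, by funext y; simp⟩
  smul_mem' := by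
    rintro c D ⟨v, rfl⟩
    exact ⟨c • v, by funext y; simp [map_smul]⟩

/-- The space of 2-cocycles of `F_φ` with coefficients in the adjoint module;
2-cochains are alternating bilinear maps `ℂ^{2p} × ℂ^{2p} → ℂ^{2p}`. -/
def Z2F (p : ℕ) (φ : ℕ → ℂ) : Submodule ℂ (V p → V p → V p) where
  carrier := {ψ | IsBil p ψ ∧ (∀ x, ψ x x = 0) ∧
    ∀ x y z, mu p φ x (ψ y z) - mu p φ y (ψ x z) + mu p φ z (ψ x y)
      - ψ (mu p φ x y) z + ψ (mu p φ x z) y - ψ (mu p φ y z) x = 0}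
  add_mem' := by
    rintro ψ₁ ψ₂ ⟨⟨hb₁, hb₂, hb₃, hb₄⟩, ha, hc⟩ ⟨⟨hb₁', hb₂', hb₃', hb₄'⟩, ha', hc'⟩
    refine ⟨⟨fun x x' y => ?_, fun c x y => ?_, fun x y y' => ?_, fun c x y => ?_⟩,
      fun x => ?_, fun x y z => ?_⟩
    · simp only [Pi.add_apply, hb₁, hb₁']; abel
    · simp only [Pi.add_apply, hb₂, hb₂', smul_add]
    · simp only [Pi.add_apply, hb₃, hb₃']; abel
    · simp only [Pi.add_apply, hb₄, hb₄', smul_add]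
    · simp only [Pi.add_apply, ha x, ha' x]; abel
    · have e := hc x y z
      have e' := hc' x y z
      simp only [Pi.add_apply, map_add]
      linear_combination (norm := module) e + e'
  zero_mem' := by
    refine ⟨⟨fun x x' y => ?_, fun c x y => ?_, fun x y y' => ?_, fun c x y => ?_⟩,
      fun x => ?_, fun x y z => ?_⟩ <;> simp
  smul_mem' := by
    rintro c ψ ⟨⟨hb₁, hb₂, hb₃, hb₄⟩, ha, hc⟩
    refine ⟨⟨fun x x' y => ?_, fun c' x y => ?_, fun x y y' => ?_, fun c' x y => ?_⟩,
      fun x => ?_, fun x y z => ?_⟩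
    · simp only [Pi.smul_apply, hb₁, smul_add]
    · simp only [Pi.smul_apply, hb₂, smul_comm c c']
    · simp only [Pi.smul_apply, hb₃, smul_add]
    · simp only [Pi.smul_apply, hb₄, smul_comm c c']
    · simp only [Pi.smul_apply, ha x, smul_zero]
    · have e := hc x y z
      simp only [Pi.smul_apply, map_smul]
      linear_combination (norm := module) c • e

/-- The space of 2-coboundaries of `F_φ` with coefficients in the adjoint module. -/
def B2F (p : ℕ) (φ : ℕ → ℂ) : Submodule ℂ (V p → V p → V p) where
  carrier := {ψ | ∃ f : V p →ₗ[ℂ] V p,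
    ∀ x y, ψ x y = mu p φ x (f y) - mu p φ y (f x) - f (mu p φ x y)}
  add_mem' := by
    rintro ψ₁ ψ₂ ⟨f₁, h₁⟩ ⟨f₂, h₂⟩
    refine ⟨f₁ + f₂, fun x y => ?_⟩
    simp only [Pi.add_apply, h₁ x y, h₂ x y, map_add, LinearMap.add_apply]
    abel
  zero_mem' := ⟨0, by intro x y; simp⟩
  smul_mem' := by
    rintro c ψ ⟨f, h⟩
    refine ⟨c • f, fun x y => ?_⟩
    simp only [Pi.smul_apply, h x y, map_smul, LinearMap.smul_apply, smul_sub]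

/-- The 2-cochains of degree `k` with respect to the grading `gr`. -/
def degF (p : ℕ) (k : ℤ) : Submodule ℂ (V p → V p → V p) where
  carrier := {ψ | ∀ (a b : ℤ), ∀ x ∈ gr p a, ∀ y ∈ gr p b, ψ x y ∈ gr p (a + b + k)}
  add_mem' := by
    intro ψ₁ ψ₂ h₁ h₂ a b x hx y hy
    simpa using Submodule.add_mem _ (h₁ a b x hx y hy) (h₂ a b x hx y hy)
  zero_mem' := by intro a b x hx y hy; simp
  smul_mem' := by
    intro c ψ h a b x hx y hy
    simpa using Submodule.smul_mem _ c (h a b x hx y hy)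

/-- A bilinear map, viewed as a plain function. -/
def toF (p : ℕ) (B : Bil p) : V p → V p → V p := fun x y => B x y

namespace Stmt0Aux

lemma coordL_apply (p j : ℕ) (h : j - 1 < 2*p) (x : V p) : coordL p j x = x ⟨j-1, h⟩ := by
  unfold coordL; rw [dif_pos h]; rfl

lemma coordL_X (p j m : ℕ) (h : j - 1 < 2*p) (hj : 1 ≤ j) :
    coordL p j (X p m) = if j = m then 1 else 0 := by
  rw [coordL_apply p j h]
  show (if (j-1) + 1 = m then (1:ℂ) else 0) = _
  rw [Nat.sub_add_cancel hj]

lemma coordL_elem (p a b j : ℕ) (v : V p) (x y : V p) :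
    coordL p j (elem p a b v x y)
      = (coordL p a x * coordL p b y - coordL p b x * coordL p a y) * coordL p j v := by
  simp only [elem, LinearMap.sub_apply, LinearMap.smulRight_apply, LinearMap.smul_apply,
    map_sub, map_smul, smul_eq_mul]
  ring

lemma coordL1_X_one (p : ℕ) (hp : 1 ≤ p) : coordL p 1 (X p 1) = 1 := by
  rw [coordL_X p 1 1 (by omega) le_rfl]; simp

lemma coordL1_X (p m : ℕ) (hp : 1 ≤ p) (hm : 2 ≤ m) : coordL p 1 (X p m) = 0 := by
  rw [coordL_X p 1 m (by omega) le_rfl, if_neg (by omega)]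

lemma key (p : ℕ) (hp : 1 ≤ p) (φ : ℕ → ℂ) (x y : V p) :
    coordL p 1 (mu p φ x y)
      = (coordL p 2 x * coordL p 1 y - coordL p 1 x * coordL p 2 y)
        + ∑ k ∈ Finset.Icc 1 (p-1),
            (coordL p (2*k+2) x * coordL p (2*k+1) y
              - coordL p (2*k+1) x * coordL p (2*k+2) y) := by
  unfold mu
  simp only [LinearMap.add_apply, LinearMap.sum_apply, map_add, map_sum, coordL_elem,
    map_neg, map_smul, smul_eq_mul, coordL1_X_one p hp]
  rw [Finset.sum_congr rfl (fun k hk => ?_)]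
  · ring
  · rw [Finset.mem_Icc] at hk
    rw [coordL1_X p (2*k+1) hp (by omega), coordL1_X p (2*k+2) hp (by omega)]
    ring

lemma eval_odd (p : ℕ) (hp : 1 ≤ p) (φ : ℕ → ℂ) (x : V p) (k : ℕ) (hk : k ≤ p - 1) :
    coordL p 1 (mu p φ x (X p (2*k+1))) = coordL p (2*k+2) x := by
  rw [key p hp φ]
  rcases Nat.eq_zero_or_pos k with rfl | hk1
  · rw [Finset.sum_eq_zero ?_]
    · norm_num [coordL_X p 1 (2*0+1) (by omega) le_rfl,
        coordL_X p 2 (2*0+1) (by omega) (by omega)]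
    · intro i hi
      rw [Finset.mem_Icc] at hi
      rw [coordL_X p (2*i+1) (2*0+1) (by omega) (by omega), if_neg (by omega),
        coordL_X p (2*i+2) (2*0+1) (by omega) (by omega), if_neg (by omega)]
      ring
  · rw [Finset.sum_eq_single k]
    · rw [coordL1_X p (2*k+1) hp (by omega),
        coordL_X p 2 (2*k+1) (by omega) (by omega), if_neg (by omega),
        coordL_X p (2*k+1) (2*k+1) (by omega) (by omega), if_pos rfl,
        coordL_X p (2*k+2) (2*k+1) (by omega) (by omega), if_neg (by omega)]
      ring
    · intro i hi hne
      rw [Finset.mem_Icc] at hi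
      rw [coordL_X p (2*i+1) (2*k+1) (by omega) (by omega), if_neg (by omega),
        coordL_X p (2*i+2) (2*k+1) (by omega) (by omega), if_neg (by omega)]
      ring
    · intro h
      exact absurd (Finset.mem_Icc.mpr ⟨hk1, hk⟩) h

lemma eval_even (p : ℕ) (hp : 1 ≤ p) (φ : ℕ → ℂ) (x : V p) (k : ℕ) (hk : k ≤ p - 1) :
    coordL p 1 (mu p φ x (X p (2*k+2))) = - coordL p (2*k+1) x := by
  rw [key p hp φ]
  rcases Nat.eq_zero_or_pos k with rfl | hk1
  · rw [Finset.sum_eq_zero ?_]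
    · norm_num [coordL_X p 1 (2*0+2) (by omega) le_rfl,
        coordL_X p 2 (2*0+2) (by omega) (by omega)]
    · intro i hi
      rw [Finset.mem_Icc] at hi
      rw [coordL_X p (2*i+1) (2*0+2) (by omega) (by omega), if_neg (by omega),
        coordL_X p (2*i+2) (2*0+2) (by omega) (by omega), if_neg (by omega)]
      ring
  · rw [Finset.sum_eq_single k]
    · rw [coordL1_X p (2*k+2) hp (by omega),
        coordL_X p 2 (2*k+2) (by omega) (by omega), if_neg (by omega),
        coordL_X p (2*k+1) (2*k+2) (by omega) (by omega), if_neg (by omega),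
        coordL_X p (2*k+2) (2*k+2) (by omega) (by omega), if_pos rfl]
      ring
    · intro i hi hne
      rw [Finset.mem_Icc] at hi
      rw [coordL_X p (2*i+1) (2*k+2) (by omega) (by omega), if_neg (by omega),
        coordL_X p (2*i+2) (2*k+2) (by omega) (by omega), if_neg (by omega)]
      ring
    · intro h
      exact absurd (Finset.mem_Icc.mpr ⟨hk1, hk⟩) h

lemma elem_skew (p a b : ℕ) (v : V p) (x y : V p) :
    elem p a b v y x = - elem p a b v x y := by
  simp only [elem, LinearMap.sub_apply, LinearMap.smulRight_apply, LinearMap.smul_apply,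
    smul_smul]
  module

lemma mu_skew (p : ℕ) (φ : ℕ → ℂ) (x y : V p) : mu p φ y x = - mu p φ x y := by
  have h : ∀ (a b : ℕ) (v : V p), elem p a b v y x = - elem p a b v x y :=
    fun a b v => elem_skew p a b v x y
  unfold mu
  simp only [LinearMap.add_apply, LinearMap.sum_apply, h, ← neg_add,
    Finset.sum_neg_distrib]

lemma left (p : ℕ) (hp : 1 ≤ p) (φ : ℕ → ℂ) (x : V p)
    (h : ∀ y : V p, coordL p 1 (mu p φ x y) = 0) : x = 0 := by
  funext i
  have hi := i.isLt
  rcases Nat.even_or_odd (i : ℕ) with ⟨k, hk⟩ | ⟨k, hk⟩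
  · have hk' : k ≤ p - 1 := by omega
    have h2 := h (X p (2*k+2))
    rw [eval_even p hp φ x k hk', neg_eq_zero,
      coordL_apply p (2*k+1) (by omega)] at h2
    have hi2 : i = (⟨2*k+1-1, by omega⟩ : Fin (2*p)) := by ext; simp; omega
    rw [hi2]; exact h2
  · have hk' : k ≤ p - 1 := by omega
    have h2 := h (X p (2*k+1))
    rw [eval_odd p hp φ x k hk', coordL_apply p (2*k+2) (by omega)] at h2
    have hi2 : i = (⟨2*k+2-1, by omega⟩ : Fin (2*p)) := by ext; simp; omega
    rw [hi2]; exact h2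

end Stmt0Aux

/-- For every `φ ∈ ℂ^{p−1}` the algebra `F_φ` is frobeniusian: the
alternating bilinear form `B(x,y) = ω_1([x,y])`, where `ω_1` is the coordinate
functional dual to `X_1`, is nondegenerate. -/
theorem stmt0 (p : ℕ) (hp : 2 ≤ p) (φ : ℕ → ℂ) :
    (∀ x : V p, (∀ y : V p, coordL p 1 (mu p φ x y) = 0) → x = 0) ∧
    (∀ y : V p, (∀ x : V p, coordL p 1 (mu p φ x y) = 0) → y = 0) := by
  constructor
  · exact fun x hx => Stmt0Aux.left p (by omega) φ x hx
  · intro y hy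
    refine Stmt0Aux.left p (by omega) φ y (fun x => ?_)
    rw [Stmt0Aux.mu_skew p φ x y, map_neg, hy x, neg_zero]
end
end

section
/- For every parameter φ ∈ ℂ^{p−1}, the center of the Lie algebra F_φ is trivial. -/
open scoped BigOperators

noncomputable section

attribute [local instance 100] LieRing.ofAssociativeRing

lemma X_apply (p j : ℕ) (i : Fin (2*p)) : X p j i = if (i : ℕ) + 1 = j then 1 else 0 := rfl

lemma coordL_apply (p j : ℕ) (h : j - 1 < 2*p) (x : V p) :
    coordL p j x = x ⟨j - 1, h⟩ := by
  simp [coordL, h]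

lemma coordL_X (p j m : ℕ) (hj1 : 1 ≤ j) (hj : j ≤ 2*p) :
    coordL p j (X p m) = if j = m then 1 else 0 := by
  have h : j - 1 < 2*p := by omega
  rw [coordL_apply p j h]
  have he : ((j - 1 : ℕ) + 1 = m) = (j = m) := by
    apply propext; omega
  simp [X_apply, he]

lemma elem_apply (p a b : ℕ) (v : V p) (x y : V p) :
    elem p a b v x y
      = (coordL p a x * coordL p b y - coordL p b x * coordL p a y) • v := by
  simp [elem, smul_smul, sub_smul]

lemma mu_comp0 (p : ℕ) (φ : ℕ → ℂ) (x y : V p) (h0 : 0 < 2*p) :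
    mu p φ x y ⟨0, h0⟩
      = -(coordL p 1 x * coordL p 2 y - coordL p 2 x * coordL p 1 y)
        - ∑ k ∈ Finset.Icc 1 (p-1),
            (coordL p (2*k+1) x * coordL p (2*k+2) y
              - coordL p (2*k+2) x * coordL p (2*k+1) y) := by
  have hX1 : X p 1 ⟨0, h0⟩ = 1 := by simp [X_apply]
  rw [mu]
  simp only [LinearMap.add_apply, LinearMap.sum_apply, Pi.add_apply,
    Finset.sum_apply, elem_apply, Pi.smul_apply]
  simp only [Pi.neg_apply, smul_eq_mul]
  rw [Finset.sum_congr rfl (fun k hk => ?_), Finset.sum_neg_distrib, hX1]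
  · ring
  · have hk1 : 1 ≤ k := (Finset.mem_Icc.mp hk).1
    have h1 : X p (2*k+1) ⟨0, h0⟩ = 0 := by
      rw [X_apply]; simp only [Fin.val_mk]; rw [if_neg]; omega
    have h2 : X p (2*k+2) ⟨0, h0⟩ = 0 := by
      rw [X_apply]; simp only [Fin.val_mk]; rw [if_neg]; omega
    rw [h1, h2, hX1]
    ring

/-- for every parameter `φ`, the center of `F_φ` is trivial. -/
theorem stmt2 (p : ℕ) (hp : 2 ≤ p) (φ : ℕ → ℂ) :
    ∀ x : V p, (∀ y : V p, mu p φ x y = 0) → x = 0 := by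
  intro x hx
  have h0 : 0 < 2*p := by omega
  have key : ∀ m : ℕ, mu p φ x (X p m) ⟨0, h0⟩ = 0 := by
    intro m; rw [hx]; rfl
  funext i
  have hn : (i : ℕ) < 2*p := i.isLt
  rw [Pi.zero_apply]
  -- helper to conclude from vanishing of a coordinate functional
  have conclude : ∀ j : ℕ, j - 1 = (i : ℕ) → 1 ≤ j → j ≤ 2*p →
      coordL p j x = 0 → x i = 0 := by
    intro j hji hj1 hj2 e
    have hlt : j - 1 < 2*p := by omega
    rw [coordL_apply p j hlt] at e
    have : (⟨j - 1, hlt⟩ : Fin (2*p)) = i := Fin.ext (by simpa using hji)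
    rwa [this] at e
  by_cases hc0 : (i : ℕ) = 0
  · -- coordinate x_1 : use y = X_2
    have e := key 2
    rw [mu_comp0 p φ x (X p 2) h0,
      coordL_X p 1 2 (by omega) (by omega), coordL_X p 2 2 (by omega) (by omega),
      Finset.sum_eq_zero (fun k hk => ?_)] at e
    · refine conclude 1 (by omega) (by omega) (by omega) ?_
      simp at e
      simpa using e
    · have hk1 : 1 ≤ k := (Finset.mem_Icc.mp hk).1
      have hk2 : k ≤ p - 1 := (Finset.mem_Icc.mp hk).2
      rw [coordL_X p (2*k+1) 2 (by omega) (by omega),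
        coordL_X p (2*k+2) 2 (by omega) (by omega),
        if_neg (by omega), if_neg (by omega)]
      ring
  by_cases hc1 : (i : ℕ) = 1
  · -- coordinate x_2 : use y = X_1
    have e := key 1
    rw [mu_comp0 p φ x (X p 1) h0,
      coordL_X p 1 1 (by omega) (by omega), coordL_X p 2 1 (by omega) (by omega),
      Finset.sum_eq_zero (fun k hk => ?_)] at e
    · refine conclude 2 (by omega) (by omega) (by omega) ?_
      simp at e
      simpa using e
    · have hk1 : 1 ≤ k := (Finset.mem_Icc.mp hk).1
      have hk2 : k ≤ p - 1 := (Finset.mem_Icc.mp hk).2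
      rw [coordL_X p (2*k+1) 1 (by omega) (by omega),
        coordL_X p (2*k+2) 1 (by omega) (by omega),
        if_neg (by omega), if_neg (by omega)]
      ring
  -- now (i : ℕ) ≥ 2
  rcases Nat.even_or_odd (i : ℕ) with ⟨k, hk⟩ | ⟨k, hk⟩
  · -- n = 2k, coordinate x_{2k+1} : use y = X_{2k+2}
    have hk1 : 1 ≤ k := by omega
    have hk2 : k ≤ p - 1 := by omega
    have hkmem : k ∈ Finset.Icc 1 (p-1) := Finset.mem_Icc.mpr ⟨hk1, hk2⟩
    have e := key (2*k+2)
    rw [mu_comp0 p φ x (X p (2*k+2)) h0,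
      coordL_X p 1 (2*k+2) (by omega) (by omega),
      coordL_X p 2 (2*k+2) (by omega) (by omega),
      Finset.sum_eq_single_of_mem k hkmem (fun b hb hbk => ?_)] at e
    · rw [coordL_X p (2*k+1) (2*k+2) (by omega) (by omega),
        coordL_X p (2*k+2) (2*k+2) (by omega) (by omega),
        if_neg (by omega), if_neg (by omega), if_pos rfl, if_neg (by omega)] at e
      refine conclude (2*k+1) (by omega) (by omega) (by omega) ?_
      simp at e
      simpa using e
    · have hb1 : 1 ≤ b := (Finset.mem_Icc.mp hb).1
      have hb2 : b ≤ p - 1 := (Finset.mem_Icc.mp hb).2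
      rw [coordL_X p (2*b+1) (2*k+2) (by omega) (by omega),
        coordL_X p (2*b+2) (2*k+2) (by omega) (by omega),
        if_neg (by omega), if_neg (by omega)]
      ring
  · -- n = 2k+1, coordinate x_{2k+2} : use y = X_{2k+1}
    have hk1 : 1 ≤ k := by omega
    have hk2 : k ≤ p - 1 := by omega
    have hkmem : k ∈ Finset.Icc 1 (p-1) := Finset.mem_Icc.mpr ⟨hk1, hk2⟩
    have e := key (2*k+1)
    rw [mu_comp0 p φ x (X p (2*k+1)) h0,
      coordL_X p 1 (2*k+1) (by omega) (by omega),
      coordL_X p 2 (2*k+1) (by omega) (by omega),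
      Finset.sum_eq_single_of_mem k hkmem (fun b hb hbk => ?_)] at e
    · rw [coordL_X p (2*k+1) (2*k+1) (by omega) (by omega),
        coordL_X p (2*k+2) (2*k+1) (by omega) (by omega),
        if_neg (by omega), if_neg (by omega), if_pos rfl, if_neg (by omega)] at e
      refine conclude (2*k+2) (by omega) (by omega) (by omega) ?_
      simp at e
      simpa using e
    · have hb1 : 1 ≤ b := (Finset.mem_Icc.mp hb).1
      have hb2 : b ≤ p - 1 := (Finset.mem_Icc.mp hb).2
      rw [coordL_X p (2*b+1) (2*k+1) (by omega) (by omega),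
        coordL_X p (2*b+2) (2*k+1) (by omega) (by omega),
        if_neg (by omega), if_neg (by omega)]
      ring
end
end

section
/- If φ avoids Ω₁, then the complex vector space of derivations of F_φ has dimension 3p−1. -/
open scoped BigOperators

noncomputable section

attribute [local instance 100] LieRing.ofAssociativeRing

namespace Stmt3Aux

/-- The `n`-th coordinate (0-based) of a vector, as a plain function, junk value 0. -/
def ex {p : ℕ} (x : V p) (n : ℕ) : ℂ := coordL p (n+1) x

lemma ex_eq {p n : ℕ} (x : V p) (h : n < 2*p) : ex x n = x ⟨n, h⟩ := by
  simp [ex, coordL, h]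

lemma ex_zero_of_ge {p n : ℕ} (x : V p) (h : 2*p ≤ n) : ex x n = 0 := by
  simp [ex, coordL, show ¬ (n < 2*p) by omega]

lemma ex_add {p : ℕ} (x y : V p) (n : ℕ) : ex (x + y) n = ex x n + ex y n :=
  map_add (coordL p (n+1)) x y

lemma ex_sub {p : ℕ} (x y : V p) (n : ℕ) : ex (x - y) n = ex x n - ex y n :=
  map_sub (coordL p (n+1)) x y

lemma ex_neg {p : ℕ} (x : V p) (n : ℕ) : ex (-x) n = -(ex x n) :=
  map_neg (coordL p (n+1)) x

lemma ex_smul {p : ℕ} (c : ℂ) (x : V p) (n : ℕ) : ex (c • x) n = c * ex x n :=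
  map_smul (coordL p (n+1)) c x

lemma ex_sum {p : ℕ} {ι : Type*} (s : Finset ι) (f : ι → V p) (n : ℕ) :
    ex (∑ i ∈ s, f i) n = ∑ i ∈ s, ex (f i) n :=
  map_sum (coordL p (n+1)) f s

lemma ex_ext {p : ℕ} {x y : V p} (h : ∀ n, n < 2*p → ex x n = ex y n) : x = y := by
  funext i
  have := h i i.isLt
  rwa [ex_eq _ i.isLt, ex_eq _ i.isLt] at this

lemma ex_X {p : ℕ} (j n : ℕ) :
    ex (X p j) n = if n + 1 = j ∧ n < 2*p then 1 else 0 := by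
  by_cases h : n < 2*p
  · rw [ex_eq _ h]
    simp only [X, h, and_true]
  · rw [ex_zero_of_ge _ (by omega)]
    simp [h]

lemma coordL_eq_ex {p : ℕ} (a : ℕ) (x : V p) : coordL p a x = ex x (a - 1) := by
  match a with
  | 0 => simp [ex, coordL]
  | a + 1 => rfl

/-- The eigenvalue of `ad X_2` on the `n`-th 0-based coordinate, `n ≥ 2`. -/
def cc (φ : ℕ → ℂ) (n : ℕ) : ℂ := if 2 ∣ n then -φ (n/2) else 1 + φ (n/2)

lemma cc_even (φ : ℕ → ℂ) (k : ℕ) : cc φ (2*k) = -φ k := by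
  simp [cc, Nat.mul_div_cancel_left _ (by norm_num : 0 < 2)]

lemma cc_odd (φ : ℕ → ℂ) (k : ℕ) : cc φ (2*k+1) = 1 + φ k := by
  have h1 : ¬ (2 ∣ (2*k+1)) := by omega
  have h2 : (2*k+1)/2 = k := by omega
  simp [cc, h1, h2]

lemma ex_elem {p : ℕ} (a b : ℕ) (v x y : V p) (n : ℕ) :
    ex (elem p a b v x y) n
      = (ex x (a-1) * ex y (b-1) - ex x (b-1) * ex y (a-1)) * ex v n := by
  simp only [elem, LinearMap.sub_apply, LinearMap.smulRight_apply, LinearMap.smul_apply,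
    ex_sub, ex_smul, coordL_eq_ex]
  ring

lemma ex_mu {p : ℕ} (φ : ℕ → ℂ) (x y : V p) (n : ℕ) (hn : n < 2*p) :
    ex (mu p φ x y) n =
      if n = 0 then
        (ex x 1 * ex y 0 - ex x 0 * ex y 1)
          + ∑ k ∈ Finset.Icc 1 (p-1),
              (ex x (2*k+1) * ex y (2*k) - ex x (2*k) * ex y (2*k+1))
      else if n = 1 then 0
      else cc φ n * (ex x 1 * ex y n - ex x n * ex y 1) := by
  have e1 : ∀ k : ℕ, 2*k+1-1 = 2*k := fun k => by omega
  have e2 : ∀ k : ℕ, 2*k+2-1 = 2*k+1 := fun k => by omega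
  have expand : ex (mu p φ x y) n
      = (ex x 0 * ex y 1 - ex x 1 * ex y 0) * (-(if n + 1 = 1 ∧ n < 2*p then (1:ℂ) else 0))
        + ∑ k ∈ Finset.Icc 1 (p-1),
            ((ex x (2*k) * ex y (2*k+1) - ex x (2*k+1) * ex y (2*k))
                * (-(if n + 1 = 1 ∧ n < 2*p then (1:ℂ) else 0))
              + (ex x 1 * ex y (2*k) - ex x (2*k) * ex y 1)
                * (-(φ k) * (if n + 1 = 2*k+1 ∧ n < 2*p then 1 else 0))
              + (ex x 1 * ex y (2*k+1) - ex x (2*k+1) * ex y 1)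
                * ((1 + φ k) * (if n + 1 = 2*k+2 ∧ n < 2*p then 1 else 0))) := by
    simp only [mu, LinearMap.add_apply, LinearMap.sum_apply, ex_add, ex_sum, ex_elem,
      ex_neg, ex_smul, ex_X, e1, e2]
  rcases eq_or_ne n 0 with rfl | hn0
  · have hsum : ∑ k ∈ Finset.Icc 1 (p-1),
        ((ex x (2*k) * ex y (2*k+1) - ex x (2*k+1) * ex y (2*k))
            * (-(if 0 + 1 = 1 ∧ 0 < 2*p then (1:ℂ) else 0))
          + (ex x 1 * ex y (2*k) - ex x (2*k) * ex y 1)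
            * (-(φ k) * (if 0 + 1 = 2*k+1 ∧ 0 < 2*p then 1 else 0))
          + (ex x 1 * ex y (2*k+1) - ex x (2*k+1) * ex y 1)
            * ((1 + φ k) * (if 0 + 1 = 2*k+2 ∧ 0 < 2*p then 1 else 0)))
        = ∑ k ∈ Finset.Icc 1 (p-1),
            (ex x (2*k+1) * ex y (2*k) - ex x (2*k) * ex y (2*k+1)) := by
      refine Finset.sum_congr rfl fun k hk => ?_
      rw [Finset.mem_Icc] at hk
      rw [if_pos ⟨rfl, hn⟩, if_neg (by omega), if_neg (by omega)]
      ring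
    rw [expand, hsum, if_pos rfl, if_pos ⟨rfl, hn⟩]
    ring
  rcases eq_or_ne n 1 with rfl | hn1
  · have hsum : ∑ k ∈ Finset.Icc 1 (p-1),
        ((ex x (2*k) * ex y (2*k+1) - ex x (2*k+1) * ex y (2*k))
            * (-(if 1 + 1 = 1 ∧ 1 < 2*p then (1:ℂ) else 0))
          + (ex x 1 * ex y (2*k) - ex x (2*k) * ex y 1)
            * (-(φ k) * (if 1 + 1 = 2*k+1 ∧ 1 < 2*p then 1 else 0))
          + (ex x 1 * ex y (2*k+1) - ex x (2*k+1) * ex y 1)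
            * ((1 + φ k) * (if 1 + 1 = 2*k+2 ∧ 1 < 2*p then 1 else 0)))
        = ∑ k ∈ Finset.Icc 1 (p-1), (0:ℂ) := by
      refine Finset.sum_congr rfl fun k hk => ?_
      rw [Finset.mem_Icc] at hk
      rw [if_neg (by omega), if_neg (by omega), if_neg (by omega)]
      ring
    rw [expand, hsum, if_neg hn0, if_pos rfl, Finset.sum_const_zero, if_neg (by omega)]
    ring
  · rw [expand, if_neg hn0, if_neg hn1]
    rcases Nat.even_or_odd n with ⟨k0, hk0⟩ | ⟨k0, hk0⟩
    · obtain rfl : n = 2*k0 := by omega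
      rw [if_neg (show ¬(2*k0 + 1 = 1 ∧ 2*k0 < 2*p) by omega)]
      have hmem : k0 ∈ Finset.Icc 1 (p-1) := Finset.mem_Icc.mpr ⟨by omega, by omega⟩
      rw [Finset.sum_eq_single_of_mem k0 hmem (fun b hb hne => by
        rw [Finset.mem_Icc] at hb
        rw [if_neg (show ¬(2*k0 + 1 = 2*b+1 ∧ 2*k0 < 2*p) by omega),
          if_neg (show ¬(2*k0 + 1 = 2*b+2 ∧ 2*k0 < 2*p) by omega)]
        ring)]
      rw [if_pos (show 2*k0 + 1 = 2*k0+1 ∧ 2*k0 < 2*p from ⟨rfl, hn⟩),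
        if_neg (show ¬(2*k0 + 1 = 2*k0+2 ∧ 2*k0 < 2*p) by omega), cc_even]
      ring
    · obtain rfl : n = 2*k0 + 1 := by omega
      rw [if_neg (show ¬(2*k0+1 + 1 = 1 ∧ 2*k0+1 < 2*p) by omega)]
      have hmem : k0 ∈ Finset.Icc 1 (p-1) := Finset.mem_Icc.mpr ⟨by omega, by omega⟩
      rw [Finset.sum_eq_single_of_mem k0 hmem (fun b hb hne => by
        rw [Finset.mem_Icc] at hb
        rw [if_neg (show ¬(2*k0+1 + 1 = 2*b+1 ∧ 2*k0+1 < 2*p) by omega),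
          if_neg (show ¬(2*k0+1 + 1 = 2*b+2 ∧ 2*k0+1 < 2*p) by omega)]
        ring)]
      rw [if_neg (show ¬(2*k0+1 + 1 = 2*k0+1 ∧ 2*k0+1 < 2*p) by omega),
        if_pos (show 2*k0+1 + 1 = 2*k0+2 ∧ 2*k0+1 < 2*p from ⟨by omega, hn⟩), cc_odd]
      ring

lemma ex_mu_bX1 {p : ℕ} (φ : ℕ → ℂ) (x : V p) (n : ℕ) (hn : n < 2*p) :
    ex (mu p φ x (X p 1)) n = if n = 0 then ex x 1 else 0 := by
  rw [ex_mu φ x _ n hn]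
  rcases eq_or_ne n 0 with rfl | hn0
  · rw [if_pos rfl, if_pos rfl]
    have hz : ∑ k ∈ Finset.Icc 1 (p-1),
        (ex x (2*k+1) * ex (X p 1) (2*k) - ex x (2*k) * ex (X p 1) (2*k+1)) = 0 :=
      Finset.sum_eq_zero fun k hk => by
        rw [Finset.mem_Icc] at hk
        simp only [ex_X]
        rw [if_neg (by omega), if_neg (by omega)]
        ring
    rw [hz]
    simp only [ex_X]
    rw [if_pos (show True ∧ 0 < 2*p from ⟨trivial, by omega⟩),
      if_neg (show ¬(1 + 1 = 1 ∧ 1 < 2*p) by omega)]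
    ring
  · rw [if_neg hn0, if_neg hn0]
    rcases eq_or_ne n 1 with rfl | hn1
    · rw [if_pos rfl]
    · rw [if_neg hn1]
      simp only [ex_X]
      rw [if_neg (by omega), if_neg (by omega)]
      ring

lemma ex_mu_bX2 {p : ℕ} (φ : ℕ → ℂ) (x : V p) (n : ℕ) (hn : n < 2*p) :
    ex (mu p φ x (X p 2)) n
      = if n = 0 then -(ex x 0) else if n = 1 then 0 else -(cc φ n * ex x n) := by
  rw [ex_mu φ x _ n hn]
  rcases eq_or_ne n 0 with rfl | hn0
  · rw [if_pos rfl, if_pos rfl]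
    have hz : ∑ k ∈ Finset.Icc 1 (p-1),
        (ex x (2*k+1) * ex (X p 2) (2*k) - ex x (2*k) * ex (X p 2) (2*k+1)) = 0 :=
      Finset.sum_eq_zero fun k hk => by
        rw [Finset.mem_Icc] at hk
        simp only [ex_X]
        rw [if_neg (by omega), if_neg (by omega)]
        ring
    rw [hz]
    simp only [ex_X]
    rw [if_neg (by omega), if_pos (show True ∧ 1 < 2*p from ⟨trivial, by omega⟩)]
    ring
  · rw [if_neg hn0, if_neg hn0]
    rcases eq_or_ne n 1 with rfl | hn1
    · rw [if_pos rfl, if_pos rfl]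
    · rw [if_neg hn1, if_neg hn1]
      simp only [ex_X]
      rw [if_neg (by omega), if_pos (show True ∧ 1 < 2*p from ⟨trivial, by omega⟩)]
      ring

lemma ex_mu_bodd {p : ℕ} (φ : ℕ → ℂ) {k : ℕ} (hk1 : 1 ≤ k) (hk2 : k ≤ p - 1)
    (hp : 0 < p) (x : V p) (n : ℕ) (hn : n < 2*p) :
    ex (mu p φ x (X p (2*k+1))) n
      = if n = 0 then ex x (2*k+1) else if n = 2*k then -(φ k) * ex x 1 else 0 := by
  rw [ex_mu φ x _ n hn]
  rcases eq_or_ne n 0 with rfl | hn0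
  · rw [if_pos rfl, if_pos rfl]
    have hz : ∑ j ∈ Finset.Icc 1 (p-1),
        (ex x (2*j+1) * ex (X p (2*k+1)) (2*j) - ex x (2*j) * ex (X p (2*k+1)) (2*j+1))
        = ex x (2*k+1) :=
      Finset.sum_eq_single_of_mem k (Finset.mem_Icc.mpr ⟨hk1, hk2⟩)
        (fun b hb hne => by
          rw [Finset.mem_Icc] at hb
          simp only [ex_X]
          rw [if_neg (by omega), if_neg (by omega)]
          ring) |>.trans ?_
    · rw [hz]
      simp only [ex_X]
      rw [if_neg (by omega), if_neg (by omega)]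
      ring
    · simp only [ex_X]
      rw [if_pos (show True ∧ 2*k < 2*p from ⟨trivial, by omega⟩),
        if_neg (show ¬(2*k+1 + 1 = 2*k+1 ∧ 2*k+1 < 2*p) by omega)]
      ring
  · rw [if_neg hn0, if_neg hn0]
    rcases eq_or_ne n 1 with rfl | hn1
    · rw [if_pos rfl, if_neg (by omega)]
    · rw [if_neg hn1]
      rcases eq_or_ne n (2*k) with rfl | hn2
      · rw [if_pos rfl]
        simp only [ex_X]
        rw [if_pos (show True ∧ 2*k < 2*p from ⟨trivial, by omega⟩),
          if_neg (show ¬(1 + 1 = 2*k+1 ∧ 1 < 2*p) by omega), cc_even]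
        ring
      · rw [if_neg hn2]
        simp only [ex_X]
        rw [if_neg (by omega), if_neg (by omega)]
        ring

lemma ex_mu_beven {p : ℕ} (φ : ℕ → ℂ) {k : ℕ} (hk1 : 1 ≤ k) (hk2 : k ≤ p - 1)
    (hp : 0 < p) (x : V p) (n : ℕ) (hn : n < 2*p) :
    ex (mu p φ x (X p (2*k+2))) n
      = if n = 0 then -(ex x (2*k)) else if n = 2*k+1 then (1 + φ k) * ex x 1 else 0 := by
  rw [ex_mu φ x _ n hn]
  rcases eq_or_ne n 0 with rfl | hn0
  · rw [if_pos rfl, if_pos rfl]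
    have hz : ∑ j ∈ Finset.Icc 1 (p-1),
        (ex x (2*j+1) * ex (X p (2*k+2)) (2*j) - ex x (2*j) * ex (X p (2*k+2)) (2*j+1))
        = -(ex x (2*k)) :=
      Finset.sum_eq_single_of_mem k (Finset.mem_Icc.mpr ⟨hk1, hk2⟩)
        (fun b hb hne => by
          rw [Finset.mem_Icc] at hb
          simp only [ex_X]
          rw [if_neg (by omega), if_neg (by omega)]
          ring) |>.trans ?_
    · rw [hz]
      simp only [ex_X]
      rw [if_neg (by omega), if_neg (by omega)]
      ring
    · simp only [ex_X]
      rw [if_neg (show ¬(2*k + 1 = 2*k+2 ∧ 2*k < 2*p) by omega),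
        if_pos (show True ∧ 2*k+1 < 2*p from ⟨trivial, by omega⟩)]
      ring
  · rw [if_neg hn0, if_neg hn0]
    rcases eq_or_ne n 1 with rfl | hn1
    · rw [if_pos rfl, if_neg (by omega)]
    · rw [if_neg hn1]
      rcases eq_or_ne n (2*k+1) with rfl | hn2
      · rw [if_pos rfl]
        simp only [ex_X]
        rw [if_pos (show True ∧ 2*k+1 < 2*p from ⟨trivial, by omega⟩),
          if_neg (show ¬(1 + 1 = 2*k+2 ∧ 1 < 2*p) by omega), cc_odd]
        ring
      · rw [if_neg hn2]
        simp only [ex_X]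
        rw [if_neg (by omega), if_neg (by omega)]
        ring

lemma mu_swap {p : ℕ} (φ : ℕ → ℂ) (x y : V p) : mu p φ x y = - mu p φ y x := by
  apply ex_ext; intro n hn
  rw [ex_neg, ex_mu φ x y n hn, ex_mu φ y x n hn]
  rcases eq_or_ne n 0 with rfl | hn0
  · rw [if_pos rfl, if_pos rfl]
    have hs : ∑ k ∈ Finset.Icc 1 (p-1),
        (ex x (2*k+1) * ex y (2*k) - ex x (2*k) * ex y (2*k+1))
        = -∑ k ∈ Finset.Icc 1 (p-1),
            (ex y (2*k+1) * ex x (2*k) - ex y (2*k) * ex x (2*k+1)) := by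
      rw [← Finset.sum_neg_distrib]
      exact Finset.sum_congr rfl fun k _ => by ring
    rw [hs]; ring
  · rw [if_neg hn0, if_neg hn0]
    rcases eq_or_ne n 1 with rfl | hn1
    · rw [if_pos rfl, if_pos rfl]; ring
    · rw [if_neg hn1, if_neg hn1]; ring

lemma ex_fDer {p : ℕ} (k : ℕ) (x : V p) (n : ℕ) :
    ex (fDer p k x) n
      = (if n + 1 = 2*k+1 ∧ n < 2*p then ex x (2*k) else 0)
        - (if n + 1 = 2*k+2 ∧ n < 2*p then ex x (2*k+1) else 0) := by
  have e1 : 2*k+1-1 = 2*k := by omega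
  have e2 : 2*k+2-1 = 2*k+1 := by omega
  simp only [fDer, LinearMap.sub_apply, LinearMap.smulRight_apply, ex_sub, ex_smul,
    coordL_eq_ex, ex_X, e1, e2]
  split_ifs <;> ring

lemma mu_X12 {p : ℕ} (φ : ℕ → ℂ) : mu p φ (X p 1) (X p 2) = -(X p 1) := by
  apply ex_ext; intro n hn
  rw [ex_mu_bX2 φ _ n hn, ex_neg]
  simp only [ex_X, true_and, and_true, false_and, and_false, if_true, if_false]
  split_ifs <;> first | ring1 | (exfalso; omega)

lemma mu_X2odd {p : ℕ} (φ : ℕ → ℂ) {k : ℕ} (hk1 : 1 ≤ k) (hk2 : k ≤ p-1) (hp : 0 < p) :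
    mu p φ (X p 2) (X p (2*k+1)) = (-(φ k)) • X p (2*k+1) := by
  apply ex_ext; intro n hn
  rw [ex_mu_bodd φ hk1 hk2 hp _ n hn, ex_smul]
  simp only [ex_X, true_and, and_true, false_and, and_false, if_true, if_false]
  split_ifs <;> first | ring1 | (exfalso; omega)

lemma mu_X2even {p : ℕ} (φ : ℕ → ℂ) {k : ℕ} (hk1 : 1 ≤ k) (hk2 : k ≤ p-1) (hp : 0 < p) :
    mu p φ (X p 2) (X p (2*k+2)) = (1 + φ k) • X p (2*k+2) := by
  apply ex_ext; intro n hn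
  rw [ex_mu_beven φ hk1 hk2 hp _ n hn, ex_smul]
  simp only [ex_X, true_and, and_true, false_and, and_false, if_true, if_false]
  split_ifs <;> first | ring1 | (exfalso; omega)

lemma mu_Xpair {p : ℕ} (φ : ℕ → ℂ) {k : ℕ} (hk1 : 1 ≤ k) (hk2 : k ≤ p-1) (hp : 0 < p) :
    mu p φ (X p (2*k+1)) (X p (2*k+2)) = -(X p 1) := by
  apply ex_ext; intro n hn
  rw [ex_mu_beven φ hk1 hk2 hp _ n hn, ex_neg]
  simp only [ex_X, true_and, and_true, false_and, and_false, if_true, if_false]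
  split_ifs <;> first | ring1 | (exfalso; omega)

lemma ex_mu_zero {p : ℕ} (φ : ℕ → ℂ) (a b : V p) (hp : 0 < p) :
    ex (mu p φ a b) 0
      = (ex a 1 * ex b 0 - ex a 0 * ex b 1)
        + ∑ k ∈ Finset.Icc 1 (p-1),
            (ex a (2*k+1) * ex b (2*k) - ex a (2*k) * ex b (2*k+1)) := by
  rw [ex_mu φ a b 0 (by omega), if_pos rfl]

lemma ex_mu_one {p : ℕ} (φ : ℕ → ℂ) (a b : V p) (hp : 0 < p) :
    ex (mu p φ a b) 1 = 0 := by
  rw [ex_mu φ a b 1 (by omega), if_neg one_ne_zero, if_pos rfl]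

lemma ex_mu_nn {p : ℕ} (φ : ℕ → ℂ) (a b : V p) (n : ℕ) (hn : n < 2*p)
    (h0 : n ≠ 0) (h1 : n ≠ 1) :
    ex (mu p φ a b) n = cc φ n * (ex a 1 * ex b n - ex a n * ex b 1) := by
  rw [ex_mu φ a b n hn, if_neg h0, if_neg h1]

lemma mu_deriv {p : ℕ} (φ : ℕ → ℂ) (v x y : V p) :
    mu p φ v (mu p φ x y) = mu p φ (mu p φ v x) y + mu p φ x (mu p φ v y) := by
  apply ex_ext; intro n hn
  have hp : 0 < p := by omega
  rw [ex_add]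
  rcases eq_or_ne n 0 with rfl | hn0
  · rw [ex_mu_zero φ v (mu p φ x y) hp, ex_mu_zero φ (mu p φ v x) y hp,
      ex_mu_zero φ x (mu p φ v y) hp, ex_mu_zero φ x y hp, ex_mu_zero φ v x hp,
      ex_mu_zero φ v y hp, ex_mu_one φ x y hp, ex_mu_one φ v x hp, ex_mu_one φ v y hp]
    have HS1 : ∑ k ∈ Finset.Icc 1 (p-1),
        (ex v (2*k+1) * ex (mu p φ x y) (2*k) - ex v (2*k) * ex (mu p φ x y) (2*k+1))
        = ∑ k ∈ Finset.Icc 1 (p-1),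
          (ex v (2*k+1) * (-φ k * (ex x 1 * ex y (2*k) - ex x (2*k) * ex y 1))
            - ex v (2*k) * ((1 + φ k) * (ex x 1 * ex y (2*k+1) - ex x (2*k+1) * ex y 1))) :=
      Finset.sum_congr rfl fun k hk => by
        rw [Finset.mem_Icc] at hk
        rw [ex_mu_nn φ x y (2*k) (by omega) (by omega) (by omega),
          ex_mu_nn φ x y (2*k+1) (by omega) (by omega) (by omega), cc_even, cc_odd]
    have HS2 : ∑ k ∈ Finset.Icc 1 (p-1),
        (ex (mu p φ v x) (2*k+1) * ex y (2*k) - ex (mu p φ v x) (2*k) * ex y (2*k+1))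
        = ∑ k ∈ Finset.Icc 1 (p-1),
          ((1 + φ k) * (ex v 1 * ex x (2*k+1) - ex v (2*k+1) * ex x 1) * ex y (2*k)
            - -φ k * (ex v 1 * ex x (2*k) - ex v (2*k) * ex x 1) * ex y (2*k+1)) :=
      Finset.sum_congr rfl fun k hk => by
        rw [Finset.mem_Icc] at hk
        rw [ex_mu_nn φ v x (2*k) (by omega) (by omega) (by omega),
          ex_mu_nn φ v x (2*k+1) (by omega) (by omega) (by omega), cc_even, cc_odd]
    have HS3 : ∑ k ∈ Finset.Icc 1 (p-1),
        (ex x (2*k+1) * ex (mu p φ v y) (2*k) - ex x (2*k) * ex (mu p φ v y) (2*k+1))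
        = ∑ k ∈ Finset.Icc 1 (p-1),
          (ex x (2*k+1) * (-φ k * (ex v 1 * ex y (2*k) - ex v (2*k) * ex y 1))
            - ex x (2*k) * ((1 + φ k) * (ex v 1 * ex y (2*k+1) - ex v (2*k+1) * ex y 1))) :=
      Finset.sum_congr rfl fun k hk => by
        rw [Finset.mem_Icc] at hk
        rw [ex_mu_nn φ v y (2*k) (by omega) (by omega) (by omega),
          ex_mu_nn φ v y (2*k+1) (by omega) (by omega) (by omega), cc_even, cc_odd]
    rw [HS1, HS2, HS3]
    have key : (∑ k ∈ Finset.Icc 1 (p-1),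
          (ex v (2*k+1) * (-φ k * (ex x 1 * ex y (2*k) - ex x (2*k) * ex y 1))
            - ex v (2*k) * ((1 + φ k) * (ex x 1 * ex y (2*k+1) - ex x (2*k+1) * ex y 1))))
        + ex v 1 * (∑ k ∈ Finset.Icc 1 (p-1),
            (ex x (2*k+1) * ex y (2*k) - ex x (2*k) * ex y (2*k+1)))
        + ex y 1 * (∑ k ∈ Finset.Icc 1 (p-1),
            (ex v (2*k+1) * ex x (2*k) - ex v (2*k) * ex x (2*k+1)))
        = (∑ k ∈ Finset.Icc 1 (p-1),
            ((1 + φ k) * (ex v 1 * ex x (2*k+1) - ex v (2*k+1) * ex x 1) * ex y (2*k)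
              - -φ k * (ex v 1 * ex x (2*k) - ex v (2*k) * ex x 1) * ex y (2*k+1)))
          + (∑ k ∈ Finset.Icc 1 (p-1),
              (ex x (2*k+1) * (-φ k * (ex v 1 * ex y (2*k) - ex v (2*k) * ex y 1))
                - ex x (2*k) * ((1 + φ k) * (ex v 1 * ex y (2*k+1) - ex v (2*k+1) * ex y 1))))
          + ex x 1 * (∑ k ∈ Finset.Icc 1 (p-1),
              (ex v (2*k+1) * ex y (2*k) - ex v (2*k) * ex y (2*k+1))) := by
      rw [Finset.mul_sum, Finset.mul_sum, Finset.mul_sum, ← Finset.sum_add_distrib,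
        ← Finset.sum_add_distrib, ← Finset.sum_add_distrib, ← Finset.sum_add_distrib]
      exact Finset.sum_congr rfl fun k hk => by ring
    linear_combination key
  · rcases eq_or_ne n 1 with rfl | hn1
    · rw [ex_mu_one φ v _ hp, ex_mu_one φ _ y hp, ex_mu_one φ x _ hp]
      norm_num
    · rw [ex_mu_nn φ v (mu p φ x y) n hn hn0 hn1, ex_mu_nn φ (mu p φ v x) y n hn hn0 hn1,
        ex_mu_nn φ x (mu p φ v y) n hn hn0 hn1, ex_mu_nn φ x y n hn hn0 hn1,
        ex_mu_nn φ v x n hn hn0 hn1, ex_mu_nn φ v y n hn hn0 hn1,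
        ex_mu_one φ x y hp, ex_mu_one φ v x hp, ex_mu_one φ v y hp]
      ring

lemma fDer_deriv {p : ℕ} (φ : ℕ → ℂ) {k : ℕ} (hk1 : 1 ≤ k) (hk2 : k ≤ p-1) (hp : 0 < p)
    (x y : V p) :
    fDer p k (mu p φ x y) = mu p φ (fDer p k x) y + mu p φ x (fDer p k y) := by
  apply ex_ext; intro n hn
  have hkp : 2*k+1 < 2*p := by omega
  rw [ex_add]
  rcases eq_or_ne n 0 with rfl | hn0
  · rw [ex_mu_zero φ _ y hp, ex_mu_zero φ x _ hp]
    have HSa : ∑ j ∈ Finset.Icc 1 (p-1),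
        (ex (fDer p k x) (2*j+1) * ex y (2*j) - ex (fDer p k x) (2*j) * ex y (2*j+1))
        = -(ex x (2*k+1)) * ex y (2*k) - ex x (2*k) * ex y (2*k+1) := by
      rw [Finset.sum_eq_single_of_mem k (Finset.mem_Icc.mpr ⟨hk1, hk2⟩)
        (fun b hb hne => ?_)]
      · rw [ex_fDer, ex_fDer,
          if_neg (show ¬(2*k+1 + 1 = 2*k+1 ∧ 2*k+1 < 2*p) by omega),
          if_pos (show 2*k+1 + 1 = 2*k+2 ∧ 2*k+1 < 2*p from ⟨by omega, by omega⟩),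
          if_pos (show 2*k + 1 = 2*k+1 ∧ 2*k < 2*p from ⟨rfl, by omega⟩),
          if_neg (show ¬(2*k + 1 = 2*k+2 ∧ 2*k < 2*p) by omega)]
        ring
      · rw [Finset.mem_Icc] at hb
        rw [ex_fDer, ex_fDer, if_neg (show ¬(2*b+1 + 1 = 2*k+1 ∧ 2*b+1 < 2*p) by omega),
          if_neg (show ¬(2*b+1 + 1 = 2*k+2 ∧ 2*b+1 < 2*p) by omega),
          if_neg (show ¬(2*b + 1 = 2*k+1 ∧ 2*b < 2*p) by omega),
          if_neg (show ¬(2*b + 1 = 2*k+2 ∧ 2*b < 2*p) by omega)]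
        ring
    have HSb : ∑ j ∈ Finset.Icc 1 (p-1),
        (ex x (2*j+1) * ex (fDer p k y) (2*j) - ex x (2*j) * ex (fDer p k y) (2*j+1))
        = ex x (2*k+1) * ex y (2*k) + ex x (2*k) * ex y (2*k+1) := by
      rw [Finset.sum_eq_single_of_mem k (Finset.mem_Icc.mpr ⟨hk1, hk2⟩)
        (fun b hb hne => ?_)]
      · rw [ex_fDer, ex_fDer,
          if_neg (show ¬(2*k+1 + 1 = 2*k+1 ∧ 2*k+1 < 2*p) by omega),
          if_pos (show 2*k+1 + 1 = 2*k+2 ∧ 2*k+1 < 2*p from ⟨by omega, by omega⟩),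
          if_pos (show 2*k + 1 = 2*k+1 ∧ 2*k < 2*p from ⟨rfl, by omega⟩),
          if_neg (show ¬(2*k + 1 = 2*k+2 ∧ 2*k < 2*p) by omega)]
        ring
      · rw [Finset.mem_Icc] at hb
        rw [ex_fDer, ex_fDer, if_neg (show ¬(2*b + 1 = 2*k+1 ∧ 2*b < 2*p) by omega),
          if_neg (show ¬(2*b + 1 = 2*k+2 ∧ 2*b < 2*p) by omega),
          if_neg (show ¬(2*b+1 + 1 = 2*k+1 ∧ 2*b+1 < 2*p) by omega),
          if_neg (show ¬(2*b+1 + 1 = 2*k+2 ∧ 2*b+1 < 2*p) by omega)]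
        ring
    rw [HSa, HSb, ex_fDer]
    rw [if_neg (show ¬(0 + 1 = 2*k+1 ∧ 0 < 2*p) by omega),
      if_neg (show ¬(0 + 1 = 2*k+2 ∧ 0 < 2*p) by omega)]
    rw [ex_fDer, ex_fDer, ex_fDer, ex_fDer,
      if_neg (show ¬(1 + 1 = 2*k+1 ∧ 1 < 2*p) by omega),
      if_neg (show ¬(1 + 1 = 2*k+2 ∧ 1 < 2*p) by omega),
      if_neg (show ¬(0 + 1 = 2*k+1 ∧ 0 < 2*p) by omega),
      if_neg (show ¬(0 + 1 = 2*k+2 ∧ 0 < 2*p) by omega),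
      if_neg (show ¬(1 + 1 = 2*k+1 ∧ 1 < 2*p) by omega),
      if_neg (show ¬(1 + 1 = 2*k+2 ∧ 1 < 2*p) by omega),
      if_neg (show ¬(0 + 1 = 2*k+1 ∧ 0 < 2*p) by omega),
      if_neg (show ¬(0 + 1 = 2*k+2 ∧ 0 < 2*p) by omega)]
    ring
  · rcases eq_or_ne n 1 with rfl | hn1
    · rw [ex_mu_one φ _ y hp, ex_mu_one φ x _ hp, ex_fDer,
        if_neg (show ¬(1 + 1 = 2*k+1 ∧ 1 < 2*p) by omega),
        if_neg (show ¬(1 + 1 = 2*k+2 ∧ 1 < 2*p) by omega)]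
      ring
    · rw [ex_mu_nn φ (fDer p k x) y n hn hn0 hn1,
        ex_mu_nn φ x (fDer p k y) n hn hn0 hn1, ex_fDer]
      have Exy2k : ex (mu p φ x y) (2*k) = -φ k * (ex x 1 * ex y (2*k) - ex x (2*k) * ex y 1) := by
        rw [ex_mu_nn φ x y (2*k) (by omega) (by omega) (by omega), cc_even]
      have Exy2k1 : ex (mu p φ x y) (2*k+1)
          = (1 + φ k) * (ex x 1 * ex y (2*k+1) - ex x (2*k+1) * ex y 1) := by
        rw [ex_mu_nn φ x y (2*k+1) (by omega) (by omega) (by omega), cc_odd]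
      rw [Exy2k, Exy2k1, ex_fDer, ex_fDer, ex_fDer, ex_fDer,
        if_neg (show ¬(1 + 1 = 2*k+1 ∧ 1 < 2*p) by omega),
        if_neg (show ¬(1 + 1 = 2*k+2 ∧ 1 < 2*p) by omega),
        if_neg (show ¬(1 + 1 = 2*k+1 ∧ 1 < 2*p) by omega),
        if_neg (show ¬(1 + 1 = 2*k+2 ∧ 1 < 2*p) by omega)]
      rcases eq_or_ne n (2*k) with rfl | hne1
      · rw [cc_even]
        split_ifs <;> first | ring1 | (exfalso; omega)
      · rcases eq_or_ne n (2*k+1) with rfl | hne2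
        · rw [cc_odd]
          split_ifs <;> first | ring1 | (exfalso; omega)
        · split_ifs <;> first | ring1 | (exfalso; omega)

/-- The linear map sending `t` to `∑ tᵢ · f_{i+1}`. -/
def fSum (p : ℕ) : (Fin (p-1) → ℂ) →ₗ[ℂ] (V p →ₗ[ℂ] V p) :=
  ∑ i : Fin (p-1), LinearMap.smulRight (LinearMap.proj i) (fDer p ((i:ℕ)+1))

lemma ex_fSum {p : ℕ} (t : Fin (p-1) → ℂ) (x : V p) (n : ℕ) :
    ex (fSum p t x) n = ∑ i : Fin (p-1), t i * ex (fDer p ((i:ℕ)+1) x) n := by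
  rw [fSum, LinearMap.sum_apply, LinearMap.sum_apply, ex_sum]
  exact Finset.sum_congr rfl fun i _ => by
    rw [LinearMap.smulRight_apply, LinearMap.smul_apply, ex_smul, LinearMap.proj_apply]

lemma L_inj {p : ℕ} (hp : 2 ≤ p) (φ : ℕ → ℂ) (v : V p) (t : Fin (p-1) → ℂ)
    (h : mu p φ v + fSum p t = 0) : v = 0 ∧ t = 0 := by
  have hp0 : 0 < p := by omega
  have key : ∀ (x : V p) (n : ℕ), ex (mu p φ v x) n + ex (fSum p t x) n = 0 := by
    intro x n
    have hx : mu p φ v x + fSum p t x = 0 := by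
      have := congrArg (fun (D : V p →ₗ[ℂ] V p) => D x) h
      simpa using this
    have := congrArg (fun w => ex w n) hx
    simpa [ex_add, ex, map_zero] using this
  have hf0 : ∀ (x : V p), ex (fSum p t x) 0 = 0 := fun x => by
    rw [ex_fSum]
    exact Finset.sum_eq_zero fun i _ => by
      rw [ex_fDer, if_neg (by omega), if_neg (by omega)]
      ring
  have hv1 : ex v 1 = 0 := by
    have := key (X p 1) 0
    rw [ex_mu_bX1 φ v 0 (by omega), if_pos rfl, hf0] at this
    simpa using this
  have hv0 : ex v 0 = 0 := by
    have := key (X p 2) 0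
    rw [ex_mu_bX2 φ v 0 (by omega), if_pos rfl, hf0] at this
    simpa using this
  have hvodd : ∀ k, 1 ≤ k → k ≤ p-1 → ex v (2*k+1) = 0 := by
    intro k hk1 hk2
    have := key (X p (2*k+1)) 0
    rw [ex_mu_bodd φ hk1 hk2 hp0 v 0 (by omega), if_pos rfl, hf0] at this
    simpa using this
  have hveven : ∀ k, 1 ≤ k → k ≤ p-1 → ex v (2*k) = 0 := by
    intro k hk1 hk2
    have := key (X p (2*k+2)) 0
    rw [ex_mu_beven φ hk1 hk2 hp0 v 0 (by omega), if_pos rfl, hf0] at this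
    simpa using this
  have ht : ∀ i : Fin (p-1), t i = 0 := by
    intro i
    set k : ℕ := (i:ℕ)+1 with hk
    have hk1 : 1 ≤ k := by omega
    have hk2 : k ≤ p-1 := by omega
    have hfs : ex (fSum p t (X p (2*k+1))) (2*k) = t i := by
      rw [ex_fSum]
      rw [Finset.sum_eq_single_of_mem i (Finset.mem_univ i) (fun b _ hne => ?_)]
      · rw [ex_fDer, ex_X, ex_X]
        split_ifs <;> first | ring1 | (exfalso; omega)
      · have hb : (b:ℕ) ≠ (i:ℕ) := fun hh => hne (Fin.ext hh)
        rw [ex_fDer, ex_X, ex_X]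
        split_ifs <;> first | ring1 | (exfalso; omega)
    have := key (X p (2*k+1)) (2*k)
    rw [ex_mu_bodd φ hk1 hk2 hp0 v (2*k) (by omega), if_neg (by omega), if_pos rfl,
      hfs, hv1] at this
    simpa using this
  constructor
  · apply ex_ext
    intro n hn
    have hz : ex (0 : V p) n = 0 := map_zero _
    rw [hz]
    rcases eq_or_ne n 0 with rfl | h0
    · exact hv0
    rcases eq_or_ne n 1 with rfl | h1
    · exact hv1
    rcases Nat.even_or_odd n with ⟨l, hl⟩ | ⟨l, hl⟩
    · obtain rfl : n = 2*l := by omega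
      exact hveven l (by omega) (by omega)
    · obtain rfl : n = 2*l+1 := by omega
      exact hvodd l (by omega) (by omega)
  · funext i
    exact ht i

lemma L_surj {p : ℕ} (hp : 2 ≤ p) (φ : ℕ → ℂ) (hΩ : AvoidsOmega1 p φ)
    (D : V p →ₗ[ℂ] V p) (hD : ∀ x y, D (mu p φ x y) = mu p φ (D x) y + mu p φ x (D y)) :
    ∃ (v : V p) (t : Fin (p-1) → ℂ), mu p φ v + fSum p t = D := by
  have hp0 : 0 < p := by omega
  -- Ω₁ helpers
  have hφ0 : ∀ l, 1 ≤ l → l ≤ p-1 → φ l ≠ 0 := fun l h1 h2 => (hΩ l l h1 h2 h1 h2).2.2.2.1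
  have hφm1 : ∀ l, 1 ≤ l → l ≤ p-1 → 1 + φ l ≠ 0 := fun l h1 h2 h =>
    (hΩ l l h1 h2 h1 h2).2.2.2.2.1 (by linear_combination h)
  have hφij : ∀ l m, 1 ≤ l → l ≤ p-1 → 1 ≤ m → m ≤ p-1 → l ≠ m → φ l ≠ φ m :=
    fun l m h1 h2 h3 h4 h5 => (hΩ l m h1 h2 h3 h4).2.2.1 h5
  have hsum1 : ∀ l m, 1 ≤ l → l ≤ p-1 → 1 ≤ m → m ≤ p-1 → 1 + φ l + φ m ≠ 0 :=
    fun l m h1 h2 h3 h4 => (hΩ l m h1 h2 h3 h4).1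
  have hcc1 : ∀ m, 2 ≤ m → m < 2*p → cc φ m - 1 ≠ 0 := by
    intro m hm2 hmp
    rcases Nat.even_or_odd m with ⟨l, hl⟩ | ⟨l, hl⟩
    · obtain rfl : m = 2*l := by omega
      rw [cc_even]
      intro h
      exact hφm1 l (by omega) (by omega) (by linear_combination -h)
    · obtain rfl : m = 2*l+1 := by omega
      rw [cc_odd]
      intro h
      exact hφ0 l (by omega) (by omega) (by linear_combination h)
  have hccφ : ∀ k m, 1 ≤ k → k ≤ p-1 → 2 ≤ m → m < 2*p → m ≠ 2*k → cc φ m + φ k ≠ 0 := by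
    intro k m hk1 hk2 hm2 hmp hne
    rcases Nat.even_or_odd m with ⟨l, hl⟩ | ⟨l, hl⟩
    · obtain rfl : m = 2*l := by omega
      rw [cc_even]
      intro h
      exact hφij k l hk1 hk2 (by omega) (by omega) (by omega) (by linear_combination h)
    · obtain rfl : m = 2*l+1 := by omega
      rw [cc_odd]
      intro h
      exact hsum1 l k (by omega) (by omega) hk1 hk2 (by linear_combination h)
  have hcc2 : ∀ k m, 1 ≤ k → k ≤ p-1 → 2 ≤ m → m < 2*p → m ≠ 2*k+1 →
      1 + φ k - cc φ m ≠ 0 := by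
    intro k m hk1 hk2 hm2 hmp hne
    rcases Nat.even_or_odd m with ⟨l, hl⟩ | ⟨l, hl⟩
    · obtain rfl : m = 2*l := by omega
      rw [cc_even]
      intro h
      exact hsum1 k l hk1 hk2 (by omega) (by omega) (by linear_combination h)
    · obtain rfl : m = 2*l+1 := by omega
      rw [cc_odd]
      intro h
      exact hφij k l hk1 hk2 (by omega) (by omega) (by omega) (by linear_combination h)
  -- pointwise consequences of the derivation property on pairs of basis vectors
  have h12 : ∀ n, n < 2*p →
      -(ex (D (X p 1)) n)
        = ex (mu p φ (D (X p 1)) (X p 2)) n - ex (mu p φ (D (X p 2)) (X p 1)) n := by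
    intro n hn
    have h := hD (X p 1) (X p 2)
    rw [mu_X12 φ, map_neg, mu_swap φ (X p 1) (D (X p 2))] at h
    have h' := congrArg (fun w => ex w n) h
    simp only [ex_neg, ex_add] at h'
    linear_combination h'
  have h2odd : ∀ k, 1 ≤ k → k ≤ p-1 → ∀ n, n < 2*p →
      -(φ k) * ex (D (X p (2*k+1))) n
        = ex (mu p φ (D (X p 2)) (X p (2*k+1))) n
          - ex (mu p φ (D (X p (2*k+1))) (X p 2)) n := by
    intro k hk1 hk2 n hn
    have h := hD (X p 2) (X p (2*k+1))
    rw [mu_X2odd φ hk1 hk2 hp0, map_smul, mu_swap φ (X p 2) (D (X p (2*k+1)))] at h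
    have h' := congrArg (fun w => ex w n) h
    simp only [ex_smul, ex_add, ex_neg] at h'
    linear_combination h'
  have h2even : ∀ k, 1 ≤ k → k ≤ p-1 → ∀ n, n < 2*p →
      (1 + φ k) * ex (D (X p (2*k+2))) n
        = ex (mu p φ (D (X p 2)) (X p (2*k+2))) n
          - ex (mu p φ (D (X p (2*k+2))) (X p 2)) n := by
    intro k hk1 hk2 n hn
    have h := hD (X p 2) (X p (2*k+2))
    rw [mu_X2even φ hk1 hk2 hp0, map_smul, mu_swap φ (X p 2) (D (X p (2*k+2)))] at h
    have h' := congrArg (fun w => ex w n) h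
    simp only [ex_smul, ex_add, ex_neg] at h'
    linear_combination h'
  -- the structure constraints on D
  have hA : ∀ n, 1 ≤ n → n < 2*p → ex (D (X p 1)) n = 0 := by
    intro n h1 hn
    have h := h12 n hn
    rw [ex_mu_bX2 φ (D (X p 1)) n hn, ex_mu_bX1 φ (D (X p 2)) n hn] at h
    rcases eq_or_ne n 1 with rfl | hn1
    · rw [if_neg one_ne_zero, if_pos rfl, if_neg one_ne_zero] at h
      linear_combination -h
    · rw [if_neg (by omega), if_neg hn1, if_neg (by omega)] at h
      have h2 : (cc φ n - 1) * ex (D (X p 1)) n = 0 := by linear_combination h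
      exact (mul_eq_zero.mp h2).resolve_left (hcc1 n (by omega) hn)
  have hB : ex (D (X p 2)) 1 = 0 := by
    have h := h2odd 1 le_rfl (by omega) 2 (by omega)
    rw [ex_mu_bodd φ le_rfl (by omega) hp0 (D (X p 2)) 2 (by omega),
      ex_mu_bX2 φ (D (X p (2*1+1))) 2 (by omega), if_neg (by omega),
      if_pos (by norm_num : (2:ℕ) = 2*1), if_neg (by omega), if_neg (by omega),
      show cc φ 2 = cc φ (2*1) by norm_num, cc_even] at h
    have h2 : φ 1 * ex (D (X p 2)) 1 = 0 := by linear_combination h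
    exact (mul_eq_zero.mp h2).resolve_left (hφ0 1 le_rfl (by omega))
  have hCodd : ∀ k, 1 ≤ k → k ≤ p-1 → ∀ n, 1 ≤ n → n < 2*p → n ≠ 2*k →
      ex (D (X p (2*k+1))) n = 0 := by
    intro k hk1 hk2 n h1 hn hne
    have h := h2odd k hk1 hk2 n hn
    rw [ex_mu_bodd φ hk1 hk2 hp0 (D (X p 2)) n hn,
      ex_mu_bX2 φ (D (X p (2*k+1))) n hn] at h
    rcases eq_or_ne n 1 with rfl | hn1
    · rw [if_neg one_ne_zero, if_neg (by omega), if_neg one_ne_zero, if_pos rfl] at h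
      have h2 : φ k * ex (D (X p (2*k+1))) 1 = 0 := by linear_combination -h
      exact (mul_eq_zero.mp h2).resolve_left (hφ0 k hk1 hk2)
    · rw [if_neg (by omega), if_neg hne, if_neg (by omega), if_neg hn1] at h
      have h2 : (cc φ n + φ k) * ex (D (X p (2*k+1))) n = 0 := by linear_combination -h
      exact (mul_eq_zero.mp h2).resolve_left (hccφ k n hk1 hk2 (by omega) hn hne)
  have hD4 : ∀ k, 1 ≤ k → k ≤ p-1 →
      (1 + φ k) * ex (D (X p (2*k+1))) 0 = -(ex (D (X p 2)) (2*k+1)) := by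
    intro k hk1 hk2
    have h := h2odd k hk1 hk2 0 (by omega)
    rw [ex_mu_bodd φ hk1 hk2 hp0 (D (X p 2)) 0 (by omega),
      ex_mu_bX2 φ (D (X p (2*k+1))) 0 (by omega), if_pos rfl, if_pos rfl] at h
    linear_combination -h
  have hEeven : ∀ k, 1 ≤ k → k ≤ p-1 → ∀ n, 1 ≤ n → n < 2*p → n ≠ 2*k+1 →
      ex (D (X p (2*k+2))) n = 0 := by
    intro k hk1 hk2 n h1 hn hne
    have h := h2even k hk1 hk2 n hn
    rw [ex_mu_beven φ hk1 hk2 hp0 (D (X p 2)) n hn,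
      ex_mu_bX2 φ (D (X p (2*k+2))) n hn] at h
    rcases eq_or_ne n 1 with rfl | hn1
    · rw [if_neg one_ne_zero, if_neg (by omega), if_neg one_ne_zero, if_pos rfl] at h
      have h2 : (1 + φ k) * ex (D (X p (2*k+2))) 1 = 0 := by linear_combination h
      exact (mul_eq_zero.mp h2).resolve_left (hφm1 k hk1 hk2)
    · rw [if_neg (by omega), if_neg hne, if_neg (by omega), if_neg hn1] at h
      have h2 : (1 + φ k - cc φ n) * ex (D (X p (2*k+2))) n = 0 := by linear_combination h
      exact (mul_eq_zero.mp h2).resolve_left (hcc2 k n hk1 hk2 (by omega) hn hne)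
  have hF : ∀ k, 1 ≤ k → k ≤ p-1 →
      φ k * ex (D (X p (2*k+2))) 0 = -(ex (D (X p 2)) (2*k)) := by
    intro k hk1 hk2
    have h := h2even k hk1 hk2 0 (by omega)
    rw [ex_mu_beven φ hk1 hk2 hp0 (D (X p 2)) 0 (by omega),
      ex_mu_bX2 φ (D (X p (2*k+2))) 0 (by omega), if_pos rfl, if_pos rfl] at h
    linear_combination h
  have hG : ∀ k, 1 ≤ k → k ≤ p-1 →
      ex (D (X p (2*k+1))) (2*k) + ex (D (X p (2*k+2))) (2*k+1) = ex (D (X p 1)) 0 := by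
    intro k hk1 hk2
    have h := hD (X p (2*k+1)) (X p (2*k+2))
    rw [mu_Xpair φ hk1 hk2 hp0, map_neg, mu_swap φ (X p (2*k+1)) (D (X p (2*k+2)))] at h
    have h' := congrArg (fun w => ex w 0) h
    simp only [ex_neg, ex_add] at h'
    rw [ex_mu_beven φ hk1 hk2 hp0 (D (X p (2*k+1))) 0 (by omega),
      ex_mu_bodd φ hk1 hk2 hp0 (D (X p (2*k+2))) 0 (by omega),
      if_pos rfl, if_pos rfl] at h'
    linear_combination h'
  -- the candidate vector and coefficients
  obtain ⟨v, hv⟩ : ∃ v : V p, ∀ m, m < 2*p → ex v m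
      = (if m = 0 then -(ex (D (X p 2)) 0) else if m = 1 then ex (D (X p 1)) 0
          else if m % 2 = 0 then ex (D (X p 2)) m / φ (m/2)
          else -(ex (D (X p 2)) m) / (1 + φ (m/2))) :=
    ⟨fun i => (if (i:ℕ) = 0 then -(ex (D (X p 2)) 0) else if (i:ℕ) = 1 then ex (D (X p 1)) 0
        else if (i:ℕ) % 2 = 0 then ex (D (X p 2)) (i:ℕ) / φ ((i:ℕ)/2)
        else -(ex (D (X p 2)) (i:ℕ)) / (1 + φ ((i:ℕ)/2))),
      fun m hm => by rw [ex_eq _ hm]⟩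
  obtain ⟨t, ht⟩ : ∃ t : Fin (p-1) → ℂ, ∀ (l : ℕ) (h1 : 1 ≤ l) (h2 : l ≤ p-1),
      t ⟨l-1, by omega⟩ = ex (D (X p (2*l+1))) (2*l) + φ l * ex (D (X p 1)) 0 :=
    ⟨fun i => ex (D (X p (2*((i:ℕ)+1)+1))) (2*((i:ℕ)+1)) + φ ((i:ℕ)+1) * ex (D (X p 1)) 0,
      fun l h1 h2 => by
        simp only [Fin.val_mk]
        rw [show l-1+1 = l from by omega]⟩
  refine ⟨v, t, ?_⟩
  -- useful values of v
  have hv0 : ex v 0 = -(ex (D (X p 2)) 0) := by rw [hv 0 (by omega), if_pos rfl]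
  have hv1 : ex v 1 = ex (D (X p 1)) 0 := by
    rw [hv 1 (by omega), if_neg one_ne_zero, if_pos rfl]
  have hvE : ∀ l, 1 ≤ l → l ≤ p-1 → ex v (2*l) = ex (D (X p 2)) (2*l) / φ l := by
    intro l h1 h2
    rw [hv (2*l) (by omega), if_neg (by omega), if_neg (by omega),
      if_pos (show 2*l % 2 = 0 from by omega), Nat.mul_div_cancel_left _ (by norm_num : 0 < 2)]
  have hvO : ∀ l, 1 ≤ l → l ≤ p-1 →
      ex v (2*l+1) = -(ex (D (X p 2)) (2*l+1)) / (1 + φ l) := by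
    intro l h1 h2
    rw [hv (2*l+1) (by omega), if_neg (by omega), if_neg (by omega),
      if_neg (show ¬((2*l+1) % 2 = 0) from by omega), show (2*l+1)/2 = l from by omega]
  -- prove equality on basis vectors and coordinates
  apply Module.Basis.ext (Pi.basisFun ℂ (Fin (2*p)))
  intro i
  have hXi : (Pi.basisFun ℂ (Fin (2*p))) i = X p ((i:ℕ)+1) := by
    funext j
    simp [Pi.basisFun_apply, Pi.single_apply, X, Fin.ext_iff, eq_comm]
  rw [hXi, LinearMap.add_apply]
  apply ex_ext
  intro n hn
  rw [ex_add]
  have him : (i:ℕ) < 2*p := i.isLt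
  rcases eq_or_ne (i:ℕ) 0 with h0 | h0
  · -- basis vector X 1
    rw [h0]
    have hf : ex (fSum p t (X p (0+1))) n = 0 := by
      rw [ex_fSum]
      exact Finset.sum_eq_zero fun i2 _ => by
        rw [ex_fDer, ex_X, ex_X]
        split_ifs <;> first | ring1 | (exfalso; omega)
    rw [hf, show (0+1 : ℕ) = 1 from rfl, ex_mu_bX1 φ v n hn]
    rcases eq_or_ne n 0 with rfl | hn0
    · rw [if_pos rfl, hv1]
      ring
    · rw [if_neg hn0, hA n (by omega) hn]
      ring
  rcases eq_or_ne (i:ℕ) 1 with h1 | h1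
  · -- basis vector X 2
    rw [h1]
    have hf : ex (fSum p t (X p (1+1))) n = 0 := by
      rw [ex_fSum]
      exact Finset.sum_eq_zero fun i2 _ => by
        rw [ex_fDer, ex_X, ex_X]
        split_ifs <;> first | ring1 | (exfalso; omega)
    rw [hf, show (1+1 : ℕ) = 2 from rfl, ex_mu_bX2 φ v n hn]
    rcases eq_or_ne n 0 with rfl | hn0
    · rw [if_pos rfl, hv0]
      ring
    rcases eq_or_ne n 1 with rfl | hn1
    · rw [if_neg one_ne_zero, if_pos rfl, hB]
      ring
    · rw [if_neg hn0, if_neg hn1]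
      rcases Nat.even_or_odd n with ⟨l, hl⟩ | ⟨l, hl⟩
      · obtain rfl : n = 2*l := by omega
        rw [hvE l (by omega) (by omega), cc_even]
        have := hφ0 l (by omega) (by omega)
        field_simp
        ring
      · obtain rfl : n = 2*l+1 := by omega
        rw [hvO l (by omega) (by omega), cc_odd]
        have := hφm1 l (by omega) (by omega)
        field_simp
        ring
  · -- basis vector X (2k+1) or X (2k+2)
    rcases Nat.even_or_odd (i:ℕ) with ⟨l, hl⟩ | ⟨l, hl⟩
    · -- i = 2l, basis vector X (2l+1)
      have hl1 : 1 ≤ l := by omega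
      have hl2 : l ≤ p-1 := by omega
      rw [show (i:ℕ)+1 = 2*l+1 from by omega]
      have hf : ex (fSum p t (X p (2*l+1))) n
          = t ⟨l-1, by omega⟩ * (if n = 2*l ∧ n < 2*p then 1 else 0) := by
        rw [ex_fSum]
        rw [Finset.sum_eq_single_of_mem (⟨l-1, by omega⟩ : Fin (p-1)) (Finset.mem_univ _)
          (fun b _ hne => ?_)]
        · simp only [Fin.val_mk]
          rw [show l-1+1 = l from by omega, ex_fDer, ex_X, ex_X]
          split_ifs <;> first | ring1 | (exfalso; omega)
        · have hb : (b:ℕ) ≠ l - 1 := fun hh => hne (Fin.ext hh)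
          rw [ex_fDer, ex_X, ex_X]
          split_ifs <;> first | ring1 | (exfalso; omega)
      rw [hf, ex_mu_bodd φ hl1 hl2 hp0 v n hn]
      rcases eq_or_ne n 0 with rfl | hn0
      · rw [if_pos rfl, if_neg (by omega), hvO l hl1 hl2]
        have hne := hφm1 l hl1 hl2
        have h4 : ex (D (X p (2*l+1))) 0 = -(ex (D (X p 2)) (2*l+1)) / (1 + φ l) := by
          rw [eq_div_iff hne]
          linear_combination hD4 l hl1 hl2
        rw [h4]
        ring
      rcases eq_or_ne n (2*l) with rfl | hn2
      · rw [if_neg hn0, if_pos rfl, if_pos ⟨rfl, hn⟩, hv1, ht l hl1 hl2]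
        ring
      · rw [if_neg hn0, if_neg hn2, if_neg (by omega),
          hCodd l hl1 hl2 n (by omega) hn hn2]
        ring
    · -- i = 2l+1, basis vector X (2l+2)
      have hl1 : 1 ≤ l := by omega
      have hl2 : l ≤ p-1 := by omega
      rw [show (i:ℕ)+1 = 2*l+2 from by omega]
      have hf : ex (fSum p t (X p (2*l+2))) n
          = -(t ⟨l-1, by omega⟩) * (if n = 2*l+1 ∧ n < 2*p then 1 else 0) := by
        rw [ex_fSum]
        rw [Finset.sum_eq_single_of_mem (⟨l-1, by omega⟩ : Fin (p-1)) (Finset.mem_univ _)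
          (fun b _ hne => ?_)]
        · simp only [Fin.val_mk]
          rw [show l-1+1 = l from by omega, ex_fDer, ex_X, ex_X]
          split_ifs <;> first | ring1 | (exfalso; omega)
        · have hb : (b:ℕ) ≠ l - 1 := fun hh => hne (Fin.ext hh)
          rw [ex_fDer, ex_X, ex_X]
          split_ifs <;> first | ring1 | (exfalso; omega)
      rw [hf, ex_mu_beven φ hl1 hl2 hp0 v n hn]
      rcases eq_or_ne n 0 with rfl | hn0
      · rw [if_pos rfl, if_neg (by omega), hvE l hl1 hl2]
        have hne := hφ0 l hl1 hl2
        have h4 : ex (D (X p (2*l+2))) 0 = -(ex (D (X p 2)) (2*l)) / φ l := by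
          rw [eq_div_iff hne]
          linear_combination hF l hl1 hl2
        rw [h4]
        ring
      rcases eq_or_ne n (2*l+1) with rfl | hn2
      · rw [if_neg hn0, if_pos rfl, if_pos ⟨rfl, hn⟩, hv1, ht l hl1 hl2]
        linear_combination -(hG l hl1 hl2)
      · rw [if_neg hn0, if_neg hn2, if_neg (by omega),
          hEeven l hl1 hl2 n (by omega) hn hn2]
        ring

end Stmt3Aux

/-- if `φ` avoids `Ω₁` then `dim Der(F_φ) = 3p − 1`. -/
theorem stmt3 (p : ℕ) (hp : 2 ≤ p) (φ : ℕ → ℂ) (hΩ : AvoidsOmega1 p φ) :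
    Module.finrank ℂ ↥(derSub p (mu p φ)) = 3*p - 1 := by
  classical
  set L : (V p × (Fin (p-1) → ℂ)) →ₗ[ℂ] (V p →ₗ[ℂ] V p) :=
    LinearMap.coprod (mu p φ) (Stmt3Aux.fSum p) with hL
  have hmem : ∀ vt : V p × (Fin (p-1) → ℂ), L vt ∈ derSub p (mu p φ) := by
    rintro ⟨v, t⟩
    have h1 : mu p φ v ∈ derSub p (mu p φ) := fun x y => Stmt3Aux.mu_deriv φ v x y
    have h2 : Stmt3Aux.fSum p t ∈ derSub p (mu p φ) := by
      have he : Stmt3Aux.fSum p t = ∑ i : Fin (p-1), t i • fDer p ((i:ℕ)+1) := by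
        rw [Stmt3Aux.fSum, LinearMap.sum_apply]
        exact Finset.sum_congr rfl fun i _ => by
          rw [LinearMap.smulRight_apply, LinearMap.proj_apply]
      rw [he]
      apply Submodule.sum_mem
      intro i _
      apply Submodule.smul_mem
      exact fun x y =>
        Stmt3Aux.fDer_deriv φ (by omega) (by have := i.isLt; omega) (by omega) x y
    have : L (v, t) = mu p φ v + Stmt3Aux.fSum p t := by
      rw [hL, LinearMap.coprod_apply]
    rw [this]
    exact Submodule.add_mem _ h1 h2
  have hrange : LinearMap.range L = derSub p (mu p φ) := by
    apply le_antisymm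
    · rintro _ ⟨vt, rfl⟩
      exact hmem vt
    · intro Dd hDd
      obtain ⟨v, t, hvt⟩ := Stmt3Aux.L_surj hp φ hΩ Dd (fun x y => hDd x y)
      exact ⟨(v, t), by simpa [hL, LinearMap.coprod_apply] using hvt⟩
  have hinj : Function.Injective L := by
    rw [← LinearMap.ker_eq_bot]
    apply LinearMap.ker_eq_bot'.mpr
    rintro ⟨v, t⟩ hvt
    have h0 : mu p φ v + Stmt3Aux.fSum p t = 0 := by
      simpa [hL, LinearMap.coprod_apply] using hvt
    have := Stmt3Aux.L_inj hp φ v t h0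
    exact Prod.mk_eq_zero.mpr this
  rw [← hrange, LinearMap.finrank_range_of_inj hinj, Module.finrank_prod,
    Module.finrank_pi, Module.finrank_pi, Fintype.card_fin, Fintype.card_fin]
  omega
end
end
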